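/- For every permutation σ of {1,…,n}: Ā(Lσ) = Ā(σ), Ā(Rσ) = Ā(σ), Ā(L'σ) = Ā(σ) and Ā(R'σ) = Ā(σ). In particular the sign s(σ) is constant on Rauzy classes and on extended Rauzy classes. -/

import Mathlib

open Equiv

namespace Rauzy

/-- `intervalCycle n a b` is the permutation of `Fin n` sending `j ↦ j+1` for
`a ≤ j < b`, sending `b ↦ a`, and fixing everything outside the interval `[a,b]`.
(It is the identity when `¬ (a ≤ b ∧ b < n)`.) -/
def intervalCycle (n a b : ℕ) : Equiv.Perm (Fin n) :=
  if hab : a ≤ b ∧ b < n then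
    { toFun := fun j =>
        ⟨if a ≤ j.val ∧ j.val < b then j.val + 1 else if j.val = b then a else j.val,
          by have := j.isLt; split_ifs <;> omega⟩
      invFun := fun j =>
        ⟨if a < j.val ∧ j.val ≤ b then j.val - 1 else if j.val = a then b else j.val,
          by have := j.isLt; split_ifs <;> omega⟩
      left_inv := by
        intro j
        have hj := j.isLt
        apply Fin.ext
        simp only [Fin.val_mk]
        split_ifs <;> omega
      right_inv := by
        intro j
        have hj := j.isLt
        apply Fin.ext
        simp only [Fin.val_mk]
        split_ifs <;> omega }
  else 1

/-- The Rauzy operator `L`: in 1-indexed terms, `L σ = γ ∘ σ` where `γ` fixes every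
`j ≤ σ(1)`, maps `j ↦ j+1` for `σ(1) < j < n`, and maps `n ↦ σ(1)+1`.
(Everything here is 0-indexed, so `σ(1)` is `σ 0`, and `γ` is the cycle
`intervalCycle n (σ(1)+1) (n-1)` in 0-indexed terms.) -/
def Lop {n : ℕ} (σ : Equiv.Perm (Fin n)) : Equiv.Perm (Fin n) :=
  if h : 0 < n then intervalCycle n ((σ ⟨0, h⟩).val + 1) (n - 1) * σ else σ

/-- The Rauzy operator `R`: in 1-indexed terms, `R σ = σ ∘ δ` where `δ` fixes every
`i ≥ σ⁻¹(n)`, maps `i ↦ i+1` for `1 ≤ i < σ⁻¹(n)−1`, and maps `σ⁻¹(n)−1 ↦ 1`. -/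
def Rop {n : ℕ} (σ : Equiv.Perm (Fin n)) : Equiv.Perm (Fin n) :=
  if h : 0 < n then σ * intervalCycle n 0 ((σ.symm ⟨n - 1, by omega⟩).val - 1) else σ

/-- The extended Rauzy operator `L' σ = (L (σ⁻¹))⁻¹`. -/
def Lext {n : ℕ} (σ : Equiv.Perm (Fin n)) : Equiv.Perm (Fin n) := (Lop σ⁻¹)⁻¹

/-- The extended Rauzy operator `R' σ = (R (σ⁻¹))⁻¹`. -/
def Rext {n : ℕ} (σ : Equiv.Perm (Fin n)) : Equiv.Perm (Fin n) := (Rop σ⁻¹)⁻¹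

/-- `σ` and `τ` are in the same Rauzy class, i.e. `τ = w σ` for a finite word `w` in
`L, R, L⁻¹, R⁻¹`: the equivalence relation generated by the operators `L` and `R`. -/
def REquiv {n : ℕ} : Equiv.Perm (Fin n) → Equiv.Perm (Fin n) → Prop :=
  Relation.EqvGen fun σ τ => τ = Lop σ ∨ τ = Rop σ

/-- `σ` and `τ` are in the same extended Rauzy class, i.e. related by a finite word in
`L, R, L', R'` and their inverses. -/
def ExtEquiv {n : ℕ} : Equiv.Perm (Fin n) → Equiv.Perm (Fin n) → Prop :=
  Relation.EqvGen fun σ τ => τ = Lop σ ∨ τ = Rop σ ∨ τ = Lext σ ∨ τ = Rext σ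

/-- `σ` is irreducible: in 1-indexed terms, for no `1 ≤ k < n` does
`σ({1,…,k}) = {n−k+1,…,n}` hold. -/
def Irreducible {n : ℕ} (σ : Equiv.Perm (Fin n)) : Prop :=
  ∀ k : ℕ, 0 < k → k < n →
    Finset.image σ (Finset.univ.filter fun i : Fin n => i.val < k) ≠
      Finset.univ.filter fun i : Fin n => n - k ≤ i.val

/-- The successor map of the cycle-invariant construction, acting on the set of top
arcs of the diagram of `σ` together with a marker for the rank path.

The element `x = 0` represents the two open endpoints of the rank path (top-left and
bottom-right), and an element `x ∈ {1,…,n−1}` represents the top arc joining the top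
points `x` and `x+1` (1-indexed).  Starting from a top arc (or from the top-left
endpoint), the path of the diagram goes down from the top black point `x+1`
(1-indexed) along an edge, either reaching the bottom-right endpoint (if
`σ⁻¹(x+1) = n`), or continuing through a bottom arc and a second edge upward —
possibly also crossing the `−1` mark — to the next top arc. -/
def nextArc {n : ℕ} (σ : Equiv.Perm (Fin n)) (x : Fin n) : Fin n :=
  have hn : 0 < n := Nat.lt_of_le_of_lt (Nat.zero_le _) x.isLt
  if hj : (σ.symm x).val = n - 1 then
    -- the rank path ends at the bottom-right endpoint; close the orbit back to `0`
    ⟨0, hn⟩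
  else
    have hlt : (σ.symm x).val + 1 < n := by have := (σ.symm x).isLt; omega
    have hv := (σ ⟨(σ.symm x).val + 1, hlt⟩).isLt
    if hm : (σ ⟨(σ.symm x).val + 1, hlt⟩).val = n - 1 then
      -- the upward edge reaches the top-right point: cross the `−1` mark, then
      -- follow the edge from the bottom-left point, reaching top arc `σ(1)` (1-indexed)
      ⟨(σ ⟨0, hn⟩).val + 1, by
        have h0 : σ ⟨0, hn⟩ ≠ σ ⟨(σ.symm x).val + 1, hlt⟩ := by
          intro hcontra
          have h1 := σ.injective hcontra
          simp only [Fin.mk.injEq] at h1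
          omega
        have h2 : (σ ⟨0, hn⟩).val ≠ n - 1 := by
          intro hcontra
          exact h0 (Fin.ext (by rw [hcontra, hm]))
        have h3 := (σ ⟨0, hn⟩).isLt
        omega⟩
    else
      -- reach the top arc whose left (white) endpoint is the top point `σ(j+1)` (1-indexed)
      ⟨(σ ⟨(σ.symm x).val + 1, hlt⟩).val + 1, by omega⟩

/-- The orbit of `x` under the successor map of the cycle-invariant construction. -/
def arcOrbit {n : ℕ} (σ : Equiv.Perm (Fin n)) (x : Fin n) : Finset (Fin n) :=
  (Finset.range n).image fun k => (nextArc σ)^[k] x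

/-- The rank `r(σ)`: the number of top arcs lying on the open (rank) path of the
cycle-invariant construction, i.e. the size of the orbit of the marker `0` minus one. -/
def rank {n : ℕ} (σ : Equiv.Perm (Fin n)) : ℕ :=
  if h : 0 < n then (arcOrbit σ ⟨0, h⟩).card - 1 else 0

/-- The cycle invariant `λ(σ)`: the multiset of the lengths (numbers of top arcs) of
the closed cycles of the cycle-invariant construction.  Each closed cycle is an orbit
of `nextArc σ` other than the orbit of the marker `0` (which is the rank path), counted
once via its minimal representative, and its length is the size of the orbit. -/
def cycleInv {n : ℕ} (σ : Equiv.Perm (Fin n)) : Multiset ℕ :=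
  if h : 0 < n then
    Multiset.map (fun x => (arcOrbit σ x).card)
      (Finset.univ.filter fun x : Fin n =>
        x ∉ arcOrbit σ ⟨0, h⟩ ∧ ∀ y ∈ arcOrbit σ x, x ≤ y).val
  else 0

/-- The extended cycle invariant `λ'(σ)`: the multiset `λ(σ)` together with one
additional part equal to the rank `r(σ)`. -/
def cycleInvExt {n : ℕ} (σ : Equiv.Perm (Fin n)) : Multiset ℕ := rank σ ::ₘ cycleInv σ

/-- `chi σ I` is `χ(I)`: the number of pairs `i < j` in `I` with `σ i < σ j`
(pairs of non-crossing edges of the diagram of `σ`). -/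
def chi {n : ℕ} (σ : Equiv.Perm (Fin n)) (I : Finset (Fin n)) : ℕ :=
  ((I ×ˢ I).filter fun p => p.1 < p.2 ∧ σ p.1 < σ p.2).card

/-- The Arf invariant `Ā(σ) = Σ_{I ⊆ {1,…,n}} (−1)^(|I| + χ(I))`. -/
def arfBar {n : ℕ} (σ : Equiv.Perm (Fin n)) : ℤ :=
  ∑ I ∈ (Finset.univ : Finset (Fin n)).powerset, (-1 : ℤ) ^ (I.card + chi σ I)

/-- The companion Arf sum `A(σ) = Σ_{I ⊆ {1,…,n}} (−1)^(χ(I))`. -/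
def arfA {n : ℕ} (σ : Equiv.Perm (Fin n)) : ℤ :=
  ∑ I ∈ (Finset.univ : Finset (Fin n)).powerset, (-1 : ℤ) ^ (chi σ I)

/-- The sign invariant `s(σ) = sign(Ā(σ)) ∈ {−1, 0, +1}`. -/
def sgn {n : ℕ} (σ : Equiv.Perm (Fin n)) : ℤ := (arfBar σ).sign

/-- The surgery operator `T`, mapping a permutation `τ` of `{1,…,n}` to the permutation
`T τ` of `{1,…,n+2}` defined (1-indexed) by `(T τ)(1) = τ(1)+2`, `(T τ)(2) = 1`, and,
for `1 ≤ i ≤ n`, `(T τ)(i+2) = τ(i)+1` if `τ(i) ≤ τ(1)` and `(T τ)(i+2) = τ(i)+2`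
otherwise.  It is built here as `α ∘ ρ ∘ β`, where `β` rearranges the positions
(0-indexed: `0 ↦ n+1`, `1 ↦ n`, `k+2 ↦ k`), `ρ` acts as `τ` on the first `n` points
and fixes the last two, and `α` adjusts the values (0-indexed: `v ↦ v+1` for
`v ≤ τ(0)`, `v ↦ v+2` for `τ(0) < v ≤ n−1`, `n ↦ 0`, `n+1 ↦ τ(0)+2`). -/
def Toper {n : ℕ} (τ : Equiv.Perm (Fin n)) : Equiv.Perm (Fin (n + 2)) :=
  if h : 0 < n then
    (intervalCycle (n + 2) ((τ ⟨0, h⟩).val + 2) (n + 1) * intervalCycle (n + 2) 0 n) *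
      (finSumFinEquiv.permCongr (Equiv.sumCongr τ (1 : Equiv.Perm (Fin 2)))) *
      (Equiv.swap (⟨n, by omega⟩ : Fin (n + 2)) ⟨n + 1, by omega⟩ *
        ((finRotate (n + 2))⁻¹) ^ 2)
  else 1

/-- `addOp σ l` is the permutation `add_ℓ(σ)` of `{1,…,n+1}` (with, 1-indexed,
`ℓ = l+1`), whose one-line notation is `(σ(1)+1, …, σ(ℓ−1)+1, 1, σ(ℓ)+1, …, σ(n)+1)`.
It is built as `α ∘ ρ ∘ β⁻¹` where `β` rearranges positions, `ρ` acts as `σ` on the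
first `n` points, and `α` shifts all values up by one cyclically. -/
def addOp {n : ℕ} (σ : Equiv.Perm (Fin n)) (l : Fin (n + 1)) : Equiv.Perm (Fin (n + 1)) :=
  intervalCycle (n + 1) 0 n *
    (finSumFinEquiv.permCongr (Equiv.sumCongr σ (1 : Equiv.Perm (Fin 1)))) *
    (intervalCycle (n + 1) l.val n)⁻¹

/-- The permutation `id'_n` of `{1,…,n}` (for `n ≥ 3`), with (1-indexed) values
`id'_n(1) = 1`, `id'_n(2) = n−1`, `id'_n(n) = n`, and `id'_n(i) = i−1` for
`3 ≤ i ≤ n−1`. -/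
def idP (n : ℕ) : Equiv.Perm (Fin n) :=
  if h : 3 ≤ n then
    { toFun := fun i =>
        ⟨if i.val = 0 then 0 else if i.val = 1 then n - 2
          else if i.val = n - 1 then n - 1 else i.val - 1,
          by have := i.isLt; split_ifs <;> omega⟩
      invFun := fun j =>
        ⟨if j.val = 0 then 0 else if j.val = n - 2 then 1
          else if j.val = n - 1 then n - 1 else j.val + 1,
          by have := j.isLt; split_ifs <;> omega⟩
      left_inv := by
        intro i
        have hi := i.isLt
        apply Fin.ext
        simp only [Fin.val_mk]
        split_ifs <;> (try contradiction) <;> omega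
      right_inv := by
        intro j
        have hj := j.isLt
        apply Fin.ext
        simp only [Fin.val_mk]
        split_ifs <;> (try contradiction) <;> omega }
  else 1

/-- The set of descents of `σ`: positions `i` (1-indexed, `i < n`) such that
`σ(i+1) = σ(i) − 1`. -/
def descentSet {n : ℕ} (σ : Equiv.Perm (Fin n)) : Finset (Fin n) :=
  Finset.univ.filter fun i =>
    ∃ j : Fin n, j.val = i.val + 1 ∧ (σ j).val + 1 = (σ i).val

/-- The set of special descents of `σ`: positions `i` (1-indexed, `i < n`) such that
`σ(i+1) = n` and `σ(1) = σ(i) − 1`. -/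
def specialDescentSet {n : ℕ} (σ : Equiv.Perm (Fin n)) : Finset (Fin n) :=
  Finset.univ.filter fun i =>
    ∃ j z : Fin n, z.val = 0 ∧ j.val = i.val + 1 ∧ (σ j).val = n - 1 ∧
      (σ z).val + 1 = (σ i).val

/-- The positions of the edges kept when forming the primitive of `σ`:
those which are neither descents nor special descents. -/
def keepSet {n : ℕ} (σ : Equiv.Perm (Fin n)) : Finset (Fin n) :=
  Finset.univ.filter fun i => i ∉ descentSet σ ∧ i ∉ specialDescentSet σ

/-- The size of the primitive of `σ`. -/
def primSize {n : ℕ} (σ : Equiv.Perm (Fin n)) : ℕ := (keepSet σ).card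

/-- The primitive `prim(σ)` of `σ`: the permutation induced by the edges `(i, σ(i))`
of `σ` which are neither descents nor special descents, after order-preserving
relabelling of the remaining positions and of the remaining values. -/
def primPerm {n : ℕ} (σ : Equiv.Perm (Fin n)) : Equiv.Perm (Fin (primSize σ)) :=
  ((keepSet σ).orderIsoOfFin rfl).toEquiv.trans
    ((Equiv.subtypeEquiv (p := fun x => x ∈ keepSet σ)
        (q := fun y => y ∈ Finset.image σ (keepSet σ)) σ
        (fun _ => (Function.Injective.mem_finset_image σ.injective).symm)).trans
      ((Finset.image σ (keepSet σ)).orderIsoOfFin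
        (by rw [Finset.card_image_of_injective _ σ.injective]; rfl)).toEquiv.symm)



section ArfProof

open Finset

variable {n : ℕ}

/-- The `±1` factor of a pair in the Arf sum. -/
def pf (σ : Equiv.Perm (Fin n)) (i j : Fin n) : ℤ :=
  if i < j ∧ σ i < σ j then -1 else 1

/-- `(-1)^(chi σ I)` as a double product. -/
def Dp (σ : Equiv.Perm (Fin n)) (I : Finset (Fin n)) : ℤ :=
  ∏ i ∈ I, ∏ j ∈ I, pf σ i j

lemma pf_pm (σ : Equiv.Perm (Fin n)) (i j : Fin n) : pf σ i j = 1 ∨ pf σ i j = -1 := by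
  unfold pf; split_ifs <;> simp

lemma pf_self (σ : Equiv.Perm (Fin n)) (i : Fin n) : pf σ i i = 1 := by
  simp [pf]

lemma neg_one_pow_chi (σ : Equiv.Perm (Fin n)) (I : Finset (Fin n)) :
    (-1 : ℤ) ^ (chi σ I) = Dp σ I := by
  unfold chi Dp pf
  rw [← Finset.prod_product', ← Finset.prod_filter, Finset.prod_const]

lemma arfBar_eq (σ : Equiv.Perm (Fin n)) :
    arfBar σ = ∑ I : Finset (Fin n), (-1 : ℤ) ^ I.card * Dp σ I := by
  unfold arfBar
  rw [Finset.powerset_univ]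
  exact Finset.sum_congr rfl fun I _ => by rw [pow_add, neg_one_pow_chi]

lemma arf_transport (σ τ : Equiv.Perm (Fin n)) (e : Finset (Fin n) ≃ Finset (Fin n))
    (h : ∀ I, (-1 : ℤ) ^ I.card * Dp τ I = (-1 : ℤ) ^ (e I).card * Dp σ (e I)) :
    arfBar τ = arfBar σ := by
  rw [arfBar_eq, arfBar_eq]
  exact Fintype.sum_equiv e _ _ h

/-- Toggle membership of `t`. -/
def toggle (t : Fin n) (I : Finset (Fin n)) : Finset (Fin n) :=
  if t ∈ I then I.erase t else insert t I

lemma mem_toggle {s t : Fin n} (h : s ≠ t) (I : Finset (Fin n)) :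
    s ∈ toggle t I ↔ s ∈ I := by
  unfold toggle
  split_ifs with ht
  · simp [Finset.mem_erase, h]
  · simp [Finset.mem_insert, h]

lemma toggle_toggle (t : Fin n) (I : Finset (Fin n)) : toggle t (toggle t I) = I := by
  unfold toggle
  by_cases h : t ∈ I
  · rw [if_pos h, if_neg (Finset.notMem_erase t I), Finset.insert_erase h]
  · rw [if_neg h, if_pos (Finset.mem_insert_self t I), Finset.erase_insert h]

/-- Toggle membership of `t` when `p` is in the set. -/
def condToggle (p t : Fin n) (I : Finset (Fin n)) : Finset (Fin n) :=
  if p ∈ I then toggle t I else I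

lemma condToggle_invol {p t : Fin n} (h : p ≠ t) :
    Function.Involutive (condToggle p t) := by
  intro I
  unfold condToggle
  by_cases hp : p ∈ I
  · rw [if_pos hp, if_pos ((mem_toggle h I).mpr hp), toggle_toggle]
  · rw [if_neg hp, if_neg hp]

lemma prod_sq_one (w : Fin n → ℤ) (hw : ∀ j, w j = 1 ∨ w j = -1) (I : Finset (Fin n)) :
    (∏ j ∈ I, w j) * (∏ j ∈ I, w j) = 1 := by
  rw [← Finset.prod_mul_distrib]
  refine Finset.prod_eq_one fun j _ => ?_
  rcases hw j with h | h <;> rw [h] <;> norm_num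

lemma Dp_insert (σ : Equiv.Perm (Fin n)) {t : Fin n} {I : Finset (Fin n)} (ht : t ∉ I) :
    Dp σ (insert t I) = Dp σ I * ∏ j ∈ I, (pf σ t j * pf σ j t) := by
  unfold Dp
  rw [Finset.prod_insert ht, Finset.prod_insert ht, pf_self, one_mul]
  have h2 : ∀ i ∈ I, ∏ j ∈ insert t I, pf σ i j = pf σ i t * ∏ j ∈ I, pf σ i j :=
    fun i _ => Finset.prod_insert ht
  rw [Finset.prod_congr rfl h2, Finset.prod_mul_distrib, Finset.prod_mul_distrib]
  ring

lemma prod_ite_mem (I : Finset (Fin n)) (p : Fin n) (c : ℤ) :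
    (∏ j ∈ I, if j = p then c else 1) = if p ∈ I then c else 1 :=
  Finset.prod_ite_eq' I p fun _ => c

/-- The key toggle computation. -/
lemma key_toggle (σ : Equiv.Perm (Fin n)) (p t : Fin n) (hpt : p ≠ t)
    (w : Fin n → ℤ) (hw : ∀ j, w j = 1 ∨ w j = -1) (hwt : w t = 1)
    (htf : ∀ j, j ≠ t → pf σ t j * pf σ j t = w j * (if j = p then -1 else 1))
    (I : Finset (Fin n)) :
    (-1 : ℤ) ^ (condToggle p t I).card * Dp σ (condToggle p t I)
      = (-1 : ℤ) ^ I.card * Dp σ I * (if p ∈ I then ∏ j ∈ I, w j else 1) := by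
  by_cases hp : p ∈ I
  · rw [condToggle, if_pos hp, if_pos hp, toggle]
    by_cases ht : t ∈ I
    · -- erase case
      have ht' : t ∉ I.erase t := Finset.notMem_erase t I
      have hIns : insert t (I.erase t) = I := Finset.insert_erase ht
      have hD : Dp σ I = Dp σ (I.erase t) * ∏ j ∈ I.erase t, (pf σ t j * pf σ j t) := by
        conv_lhs => rw [← hIns]
        exact Dp_insert σ ht'
      have hprod : ∏ j ∈ I.erase t, (pf σ t j * pf σ j t)
          = (∏ j ∈ I.erase t, w j) * (if p ∈ I.erase t then -1 else 1) := by
        rw [← prod_ite_mem (I.erase t) p (-1 : ℤ), ← Finset.prod_mul_distrib]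
        exact Finset.prod_congr rfl fun j hj => htf j (Finset.ne_of_mem_erase hj)
      have hpe : p ∈ I.erase t := Finset.mem_erase.mpr ⟨hpt, hp⟩
      have hwe : ∏ j ∈ I.erase t, w j = ∏ j ∈ I, w j := Finset.prod_erase I hwt
      have hcard : (I.erase t).card + 1 = I.card := Finset.card_erase_add_one ht
      have hsq : (∏ j ∈ I, w j) * (∏ j ∈ I, w j) = 1 := prod_sq_one w hw I
      rw [if_pos ht, hD, hprod, if_pos hpe, hwe, ← hcard, pow_succ]
      linear_combination (-((-1 : ℤ) ^ (I.erase t).card * Dp σ (I.erase t))) * hsq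
    · -- insert case
      have hD := Dp_insert σ ht
      have hprod : ∏ j ∈ I, (pf σ t j * pf σ j t)
          = (∏ j ∈ I, w j) * (if p ∈ I then -1 else 1) := by
        rw [← prod_ite_mem I p (-1 : ℤ), ← Finset.prod_mul_distrib]
        exact Finset.prod_congr rfl fun j hj => htf j (fun h => ht (h ▸ hj))
      rw [if_neg ht, Finset.card_insert_of_notMem ht, hD, hprod, if_pos hp, pow_succ]
      ring
  · rw [condToggle, if_neg hp, if_neg hp, mul_one]

/-- Product of the correction factors. -/
lemma corr_prod (I : Finset (Fin n)) (p : Fin n) (w : Fin n → ℤ) (hwp : w p = 1)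
    (r : Fin n → Fin n → Prop) [DecidableRel r]
    (hasym : ∀ i j, r i j → ¬ r j i) (htot : ∀ i j, i ≠ j → r i j ∨ r j i) :
    (∏ i ∈ I, ∏ j ∈ I,
        if r i j then (if i = p then w j else 1) * (if j = p then w i else 1) else 1)
      = if p ∈ I then ∏ j ∈ I, w j else 1 := by
  have hirr : ∀ i, ¬ r i i := fun i h => hasym i i h h
  have hpt : ∀ i j, (if r i j then (if i = p then w j else 1) * (if j = p then w i else 1) else 1)
      = (if i = p then (if r p j then w j else 1) else 1)
        * (if j = p then (if r i p then w i else 1) else 1) := by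
    intro i j
    by_cases hi : i = p <;> by_cases hj : j = p
    · subst hi; subst hj; simp [hirr]
    · subst hi; simp [hj]
    · subst hj; simp [hi]
    · simp [hi, hj]
  have hsplit : (∏ i ∈ I, ∏ j ∈ I,
        if r i j then (if i = p then w j else 1) * (if j = p then w i else 1) else 1)
      = (∏ i ∈ I, ∏ j ∈ I, (if i = p then (if r p j then w j else 1) else 1))
        * (∏ i ∈ I, ∏ j ∈ I, (if j = p then (if r i p then w i else 1) else 1)) := by
    rw [← Finset.prod_mul_distrib]
    refine Finset.prod_congr rfl fun i _ => ?_
    rw [← Finset.prod_mul_distrib]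
    exact Finset.prod_congr rfl fun j _ => hpt i j
  have hA : (∏ i ∈ I, ∏ j ∈ I, (if i = p then (if r p j then w j else 1) else 1))
      = if p ∈ I then (∏ j ∈ I, if r p j then w j else 1) else 1 := by
    rw [← Finset.prod_ite_eq' I p (fun _ => ∏ j ∈ I, if r p j then w j else 1)]
    refine Finset.prod_congr rfl fun i _ => ?_
    by_cases hi : i = p <;> simp [hi]
  have hB : (∏ i ∈ I, ∏ j ∈ I, (if j = p then (if r i p then w i else 1) else 1))
      = if p ∈ I then (∏ i ∈ I, if r i p then w i else 1) else 1 := by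
    by_cases hp : p ∈ I
    · rw [if_pos hp]
      refine Finset.prod_congr rfl fun i _ => ?_
      rw [Finset.prod_ite_eq' I p (fun _ => if r i p then w i else 1), if_pos hp]
    · rw [if_neg hp]
      refine Finset.prod_eq_one fun i _ => ?_
      rw [Finset.prod_ite_eq' I p (fun _ => if r i p then w i else 1), if_neg hp]
  rw [hsplit, hA, hB]
  by_cases hp : p ∈ I
  · rw [if_pos hp, if_pos hp, if_pos hp, ← Finset.prod_mul_distrib]
    refine Finset.prod_congr rfl fun j _ => ?_
    by_cases hj : j = p
    · subst hj; simp [hirr, hwp]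
    · rcases htot j p hj with h | h
      · rw [if_neg (hasym j p h), if_pos h, one_mul]
      · rw [if_pos h, if_neg (hasym p j h), mul_one]
  · simp [hp]

lemma intervalCycle_apply_val {a b : ℕ} (hab : a ≤ b ∧ b < n) (v : Fin n) :
    ((intervalCycle n a b) v).val
      = if a ≤ v.val ∧ v.val < b then v.val + 1 else if v.val = b then a else v.val := by
  rw [intervalCycle, dif_pos hab]
  rfl

lemma intervalCycle_eq_one (hn : 0 < n) : intervalCycle n 0 0 = 1 := by
  ext v
  rw [intervalCycle_apply_val ⟨le_refl 0, hn⟩]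
  simp only [Equiv.Perm.coe_one, id_eq]
  split_ifs <;> omega

set_option maxHeartbeats 1600000 in
lemma arf_Lop (σ : Equiv.Perm (Fin n)) : arfBar (Lop σ) = arfBar σ := by
  rcases Nat.eq_zero_or_pos n with hn | hn
  · rw [Lop, dif_neg (by omega)]
  rw [Lop, dif_pos hn]
  set z : Fin n := ⟨0, hn⟩ with hz
  by_cases hdeg : (σ z).val = n - 1
  · have h1 : intervalCycle n ((σ z).val + 1) (n - 1) = 1 := by
      rw [intervalCycle, dif_neg (by omega)]
    rw [h1, one_mul]
  -- non-degenerate case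
  have hσ0 := (σ z).isLt
  set a : ℕ := (σ z).val + 1 with ha
  have hab : a ≤ n - 1 ∧ n - 1 < n := ⟨by omega, by omega⟩
  set γ : Equiv.Perm (Fin n) := intervalCycle n a (n - 1) with hγ
  set p : Fin n := σ.symm ⟨n - 1, by omega⟩ with hp
  have hpv : (σ p).val = n - 1 := by rw [hp, Equiv.apply_symm_apply]
  have hpiff : ∀ i : Fin n, i = p ↔ (σ i).val = n - 1 := by
    intro i
    constructor
    · intro h; rw [h, hpv]
    · intro h
      rw [hp, Equiv.eq_symm_apply]
      exact Fin.ext h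
  have hp0 : p ≠ z := fun h => hdeg (by rw [← h, hpv])
  set w : Fin n → ℤ := fun j => if a ≤ (σ j).val ∧ (σ j).val < n - 1 then -1 else 1 with hw
  have hwpm : ∀ j, w j = 1 ∨ w j = -1 := by
    intro j; rw [hw]; dsimp only; split_ifs <;> simp
  have hwz : w z = 1 := by
    rw [hw]; dsimp only; rw [if_neg (by omega)]
  have hwp1 : w p = 1 := by
    rw [hw]; dsimp only; rw [hpv, if_neg (by omega)]
  -- pointwise identity
  have hpw : ∀ i j : Fin n, pf (γ * σ) i j
      = pf σ i j * (if i < j then (if i = p then w j else 1) * (if j = p then w i else 1) else 1) := by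
    intro i j
    by_cases hij : i < j
    · have hne : i ≠ j := ne_of_lt hij
      have hσne : (σ i).val ≠ (σ j).val := fun h => hne (σ.injective (Fin.ext h))
      have hiu := (σ i).isLt
      have hjv := (σ j).isLt
      rw [pf, pf, if_pos hij]
      simp only [Equiv.Perm.mul_apply, Fin.lt_def, hγ, intervalCycle_apply_val hab,
        hpiff, hw]
      split_ifs <;> omega
    · have h1 : pf (γ * σ) i j = 1 := by rw [pf, if_neg (fun h => hij h.1)]
      have h2 : pf σ i j = 1 := by rw [pf, if_neg (fun h => hij h.1)]
      rw [h1, h2, if_neg hij, mul_one]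
  -- product identity
  have hDL : ∀ I : Finset (Fin n), Dp (γ * σ) I = Dp σ I * (if p ∈ I then ∏ j ∈ I, w j else 1) := by
    intro I
    have h1 : Dp (γ * σ) I = Dp σ I * (∏ i ∈ I, ∏ j ∈ I,
        if i < j then (if i = p then w j else 1) * (if j = p then w i else 1) else 1) := by
      rw [Dp, Dp, ← Finset.prod_mul_distrib]
      refine Finset.prod_congr rfl fun i _ => ?_
      rw [← Finset.prod_mul_distrib]
      exact Finset.prod_congr rfl fun j _ => hpw i j
    rw [h1, corr_prod I p w hwp1 (· < ·) (fun i j => lt_asymm) (fun i j h => lt_or_gt_of_ne h)]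
  -- toggle data
  have htf : ∀ j : Fin n, j ≠ z → pf σ z j * pf σ j z = w j * (if j = p then -1 else 1) := by
    intro j hj
    have hjz : (0 : ℕ) < j.val := by
      rcases Nat.eq_zero_or_pos j.val with h | h
      · exact absurd (Fin.ext (by rw [h]) : j = z) hj
      · exact h
    have hσne : (σ j).val ≠ (σ z).val := fun h => hj (σ.injective (Fin.ext h))
    have hjv := (σ j).isLt
    have hz0 : (⟨0, hn⟩ : Fin n).val = 0 := rfl
    rw [pf, pf]
    simp only [Fin.lt_def, hpiff, hw, Fin.val_mk]
    split_ifs <;> omega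
  refine arf_transport σ (γ * σ)
    (Function.Involutive.toPerm (condToggle p z) (condToggle_invol (p := p) (t := z) hp0))
    (fun I => ?_)
  have he : Function.Involutive.toPerm (condToggle p z)
      (condToggle_invol (p := p) (t := z) hp0) I = condToggle p z I := rfl
  rw [he, key_toggle σ p z hp0 w hwpm hwz htf I, hDL I]
  ring

set_option maxHeartbeats 1600000 in
lemma arf_Rop (σ : Equiv.Perm (Fin n)) : arfBar (Rop σ) = arfBar σ := by
  rcases Nat.eq_zero_or_pos n with hn | hn
  · rw [Rop, dif_neg (by omega)]
  rw [Rop, dif_pos hn]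
  set q : Fin n := σ.symm ⟨n - 1, by omega⟩ with hq
  by_cases hq0 : q.val = 0
  · have hb0 : q.val - 1 = 0 := by omega
    rw [hb0, intervalCycle_eq_one hn, mul_one]
  -- non-degenerate case
  have hqlt := q.isLt
  set b : ℕ := q.val - 1 with hb
  have hqb : q.val = b + 1 := by omega
  have hab : (0 : ℕ) ≤ b ∧ b < n := ⟨Nat.zero_le _, by omega⟩
  set δ : Equiv.Perm (Fin n) := intervalCycle n 0 b with hδ
  set z : Fin n := ⟨0, hn⟩ with hz
  set b' : Fin n := ⟨b, by omega⟩ with hb'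
  have hδb : δ b' = z := by
    apply Fin.ext
    rw [hδ, intervalCycle_apply_val hab]
    simp only [hb', hz]
    split_ifs <;> omega
  have hqv : (σ q).val = n - 1 := by rw [hq, Equiv.apply_symm_apply]
  have hzq : z ≠ q := fun h => hq0 (by rw [← h])
  set w2 : Fin n → ℤ := fun i => if i.val < b then -1 else 1 with hw2
  set w' : Fin n → ℤ := fun y => if 1 ≤ y.val ∧ y.val ≤ b then -1 else 1 with hw'
  have hw'pm : ∀ j, w' j = 1 ∨ w' j = -1 := by
    intro j; rw [hw']; dsimp only; split_ifs <;> simp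
  have hw'q : w' q = 1 := by
    rw [hw']; dsimp only; rw [if_neg (by omega)]
  have hw2b' : w2 b' = 1 := by
    rw [hw2]; dsimp only [hb', Fin.val_mk]; exact if_neg (lt_irrefl b)
  -- pointwise identity
  have hpw : ∀ i j : Fin n, pf (σ * δ) i j
      = pf σ (δ i) (δ j) * (if σ (δ i) < σ (δ j)
          then (if i = b' then w2 j else 1) * (if j = b' then w2 i else 1) else 1) := by
    intro i j
    by_cases hij : i = j
    · subst hij
      simp [pf_self]
    · have hδne : (δ i).val ≠ (δ j).val := fun h => hij (δ.injective (Fin.ext h))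
      have hσne : (σ (δ i)).val ≠ (σ (δ j)).val :=
        fun h => hδne (congrArg Fin.val (σ.injective (Fin.ext h)))
      have hiu := i.isLt
      have hjv := j.isLt
      have hine : i.val ≠ j.val := fun h => hij (Fin.ext h)
      rw [pf, pf]
      simp only [Equiv.Perm.mul_apply, Fin.lt_def, hδ, intervalCycle_apply_val hab,
        Fin.ext_iff, hb', hw2]
      split_ifs <;> omega
  -- product identity
  have hDR : ∀ I : Finset (Fin n), Dp (σ * δ) I
      = Dp σ (I.map δ.toEmbedding) * (if b' ∈ I then ∏ i ∈ I, w2 i else 1) := by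
    intro I
    have h0 : Dp σ (I.map δ.toEmbedding) = ∏ i ∈ I, ∏ j ∈ I, pf σ (δ i) (δ j) := by
      rw [Dp, Finset.prod_map]
      exact Finset.prod_congr rfl fun i _ => Finset.prod_map I δ.toEmbedding _
    have h1 : Dp (σ * δ) I = (∏ i ∈ I, ∏ j ∈ I, pf σ (δ i) (δ j)) * (∏ i ∈ I, ∏ j ∈ I,
        if σ (δ i) < σ (δ j)
          then (if i = b' then w2 j else 1) * (if j = b' then w2 i else 1) else 1) := by
      rw [Dp, ← Finset.prod_mul_distrib]
      refine Finset.prod_congr rfl fun i _ => ?_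
      rw [← Finset.prod_mul_distrib]
      exact Finset.prod_congr rfl fun j _ => hpw i j
    have htot : ∀ i j : Fin n, i ≠ j → σ (δ i) < σ (δ j) ∨ σ (δ j) < σ (δ i) := by
      intro i j hij
      have : σ (δ i) ≠ σ (δ j) := fun h => hij (δ.injective (σ.injective h))
      exact lt_or_gt_of_ne this
    rw [h1, h0, corr_prod I b' w2 hw2b' (fun i j => σ (δ i) < σ (δ j))
      (fun i j => lt_asymm) htot]
  -- membership and product conversion
  have hmem : ∀ I : Finset (Fin n), b' ∈ I ↔ z ∈ I.map δ.toEmbedding := by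
    intro I
    rw [← hδb]
    exact (Finset.mem_map' δ.toEmbedding).symm
  have hconv : ∀ I : Finset (Fin n), ∏ j ∈ I.map δ.toEmbedding, w' j = ∏ i ∈ I, w2 i := by
    intro I
    rw [Finset.prod_map]
    refine Finset.prod_congr rfl fun i _ => ?_
    have hiu := i.isLt
    rw [hw', hw2]
    dsimp only [Equiv.coe_toEmbedding]
    rw [hδ, intervalCycle_apply_val hab]
    split_ifs <;> omega
  -- toggle data
  have htf : ∀ j : Fin n, j ≠ q → pf σ q j * pf σ j q = w' j * (if j = z then -1 else 1) := by
    intro j hj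
    have hσne : (σ j).val ≠ (σ q).val := fun h => hj (σ.injective (Fin.ext h))
    have hjv := (σ j).isLt
    have hju := j.isLt
    have hjq : j.val ≠ q.val := fun h => hj (Fin.ext h)
    rw [pf, pf]
    simp only [Fin.lt_def, hqv, hw', Fin.ext_iff, hz]
    split_ifs <;> omega
  refine arf_transport σ (σ * δ)
    ((δ.finsetCongr.trans (Function.Involutive.toPerm (condToggle z q)
      (condToggle_invol (p := z) (t := q) hzq)))) (fun I => ?_)
  have he : (δ.finsetCongr.trans (Function.Involutive.toPerm (condToggle z q)
        (condToggle_invol (p := z) (t := q) hzq))) I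
      = condToggle z q (I.map δ.toEmbedding) := rfl
  rw [he, key_toggle σ z q hzq w' hw'pm hw'q htf (I.map δ.toEmbedding), hDR I,
    Finset.card_map]
  by_cases hzm : z ∈ I.map δ.toEmbedding
  · rw [if_pos hzm, if_pos ((hmem I).mpr hzm), hconv I]
    ring
  · rw [if_neg hzm, if_neg (fun h => hzm ((hmem I).mp h))]
    ring

lemma arf_inv (σ : Equiv.Perm (Fin n)) : arfBar σ⁻¹ = arfBar σ := by
  refine arf_transport σ σ⁻¹ ((σ⁻¹ : Equiv.Perm (Fin n)).finsetCongr) (fun I => ?_)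
  have he : (σ⁻¹ : Equiv.Perm (Fin n)).finsetCongr I
      = I.map (σ⁻¹ : Equiv.Perm (Fin n)).toEmbedding := rfl
  rw [he, Finset.card_map]
  congr 1
  rw [Dp, Dp, Finset.prod_map]
  refine Finset.prod_congr rfl fun i _ => ?_
  rw [Finset.prod_map]
  refine Finset.prod_congr rfl fun j _ => ?_
  rw [pf, pf]
  dsimp only [Equiv.coe_toEmbedding]
  simp only [show ∀ x, σ (σ⁻¹ x) = x from fun x => σ.apply_symm_apply x,
    show ∀ x, σ (σ⁻¹ x) = x from fun x => σ.apply_symm_apply x]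
  exact if_congr and_comm rfl rfl

lemma arf_Lext (σ : Equiv.Perm (Fin n)) : arfBar (Lext σ) = arfBar σ := by
  rw [Lext, arf_inv, arf_Lop, arf_inv]

lemma arf_Rext (σ : Equiv.Perm (Fin n)) : arfBar (Rext σ) = arfBar σ := by
  rw [Rext, arf_inv, arf_Rop, arf_inv]

end ArfProof

/-- The Arf invariant `Ā` is invariant under `L`, `R`, `L'` and `R'`; in particular
the sign `s` is constant on Rauzy classes and on extended Rauzy classes. -/
theorem arf_invariance (n : ℕ) (σ : Equiv.Perm (Fin n)) :
    arfBar (Lop σ) = arfBar σ ∧ arfBar (Rop σ) = arfBar σ ∧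
    arfBar (Lext σ) = arfBar σ ∧ arfBar (Rext σ) = arfBar σ ∧
    (∀ τ : Equiv.Perm (Fin n), REquiv σ τ → sgn τ = sgn σ) ∧
    (∀ τ : Equiv.Perm (Fin n), ExtEquiv σ τ → sgn τ = sgn σ) := by
  have hext : ∀ x y : Equiv.Perm (Fin n), ExtEquiv x y → arfBar y = arfBar x := by
    intro x y h
    induction h with
    | rel a b hab =>
      rcases hab with h | h | h | h <;> rw [h]
      · exact arf_Lop a
      · exact arf_Rop a
      · exact arf_Lext a
      · exact arf_Rext a
    | refl a => rfl
    | symm a b _ ih => exact ih.symm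
    | trans a b c _ _ ih1 ih2 => exact ih2.trans ih1
  have hre : ∀ x y : Equiv.Perm (Fin n), REquiv x y → arfBar y = arfBar x := by
    intro x y h
    induction h with
    | rel a b hab =>
      rcases hab with h | h <;> rw [h]
      · exact arf_Lop a
      · exact arf_Rop a
    | refl a => rfl
    | symm a b _ ih => exact ih.symm
    | trans a b c _ _ ih1 ih2 => exact ih2.trans ih1
  exact ⟨arf_Lop σ, arf_Rop σ, arf_Lext σ, arf_Rext σ,
    fun τ h => by rw [sgn, sgn, hre σ τ h],
    fun τ h => by rw [sgn, sgn, hext σ τ h]⟩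

end Rauzy
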